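/- Let σ, τ > 0 and let a_σ ∈ H_σ. If τ ≥ σ, the future causal shadow (a_σ + V̄) ∩ H_τ of a_σ on H_τ is exactly the closed hyperbolic ball {a ∈ H_τ : d_τ(a, a_τ) ≤ τ·c_{σ,τ}} centered at a_τ = (τ/σ)·a_σ, where c_{σ,τ} = arcosh((σ² + τ²)/(2στ)) and d_τ(a,b) = τ·arcosh(⟨a,b⟩/τ²). -/

import Mathlib

noncomputable section

open scoped RealInnerProductSpace

abbrev E3 := EuclideanSpace ℝ (Fin 3)

def Hyp (τ : ℝ) : Set (ℝ × E3) := {x | x.1 = Real.sqrt (‖x.2‖ ^ 2 + τ ^ 2)}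

/-- The closed forward light cone. -/
def Vbar : Set (ℝ × E3) := {x | ‖x.2‖ ≤ x.1}

/-- Inverse hyperbolic cosine. -/
def arcosh (x : ℝ) : ℝ := Real.log (x + Real.sqrt (x ^ 2 - 1))

/-- The Minkowski inner product. -/
def mink (a b : ℝ × E3) : ℝ := a.1 * b.1 - ⟪a.2, b.2⟫

/-- The hyperbolic distance `d_τ(a,b) = τ·arcosh(⟨a,b⟩/τ²)` on `H_τ`. -/
def dHyp (τ : ℝ) (a b : ℝ × E3) : ℝ := τ * arcosh (mink a b / τ ^ 2)

lemma arcosh_strictMonoOn : StrictMonoOn arcosh (Set.Ici 1) := by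
  intro x hx y hy hxy
  simp only [Set.mem_Ici] at hx hy
  unfold arcosh
  have h1 : Real.sqrt (x ^ 2 - 1) ≤ Real.sqrt (y ^ 2 - 1) := by
    apply Real.sqrt_le_sqrt; nlinarith
  have h0 : (0 : ℝ) < x + Real.sqrt (x ^ 2 - 1) := by
    have := Real.sqrt_nonneg (x ^ 2 - 1); linarith
  exact Real.log_lt_log h0 (by linarith)

lemma hyp_facts {ρ : ℝ} (hρ : 0 < ρ) {x : ℝ × E3} (hx : x ∈ Hyp ρ) :
    x.1 ^ 2 = ‖x.2‖ ^ 2 + ρ ^ 2 ∧ ρ ≤ x.1 := by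
  have hx' : x.1 = Real.sqrt (‖x.2‖ ^ 2 + ρ ^ 2) := hx
  have hnn : (0:ℝ) ≤ ‖x.2‖ ^ 2 + ρ ^ 2 := by positivity
  have hsq : x.1 ^ 2 = ‖x.2‖ ^ 2 + ρ ^ 2 := by rw [hx']; exact Real.sq_sqrt hnn
  have h0 : 0 ≤ x.1 := hx' ▸ Real.sqrt_nonneg _
  have : ρ ≤ x.1 := by nlinarith [sq_nonneg ‖x.2‖]
  exact ⟨hsq, this⟩

/-- From `0 ≤ x`, `0 ≤ y`, `x^2 ≤ y^2` deduce `x ≤ y`. -/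
lemma le_of_sq_le_sq' {x y : ℝ} (hx : 0 ≤ x) (hy : 0 ≤ y) (h : x ^ 2 ≤ y ^ 2) : x ≤ y := by
  have := Real.sqrt_le_sqrt h
  rwa [Real.sqrt_sq hx, Real.sqrt_sq hy] at this

set_option maxHeartbeats 1000000 in
/-- For `τ ≥ σ > 0` and `a_σ ∈ H_σ`, the future causal shadow of `a_σ` on `H_τ` is the
closed hyperbolic ball of radius `τ·arcosh((σ²+τ²)/(2στ))` about `a_τ = (τ/σ)·a_σ`. -/
theorem stmt6 (σ τ : ℝ) (hσ : 0 < σ) (hτ : 0 < τ) (hle : σ ≤ τ)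
    (aσ : ℝ × E3) (haσ : aσ ∈ Hyp σ) :
    {a ∈ Hyp τ | a - aσ ∈ Vbar} =
      {a ∈ Hyp τ | dHyp τ a ((τ / σ) • aσ) ≤ τ * arcosh ((σ ^ 2 + τ ^ 2) / (2 * σ * τ))} := by
  obtain ⟨hσsq, hσle⟩ := hyp_facts hσ haσ
  ext a
  simp only [Set.mem_setOf_eq, Set.mem_sep_iff]
  refine and_congr_right fun ha => ?_
  obtain ⟨hτsq, hτle⟩ := hyp_facts hτ ha
  have ha1pos : 0 < a.1 := lt_of_lt_of_le hτ hτle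
  have haσ1pos : 0 < aσ.1 := lt_of_lt_of_le hσ hσle
  set m := mink a aσ with hm
  have hmdef : m = a.1 * aσ.1 - ⟪a.2, aσ.2⟫ := rfl
  have hcs : ⟪a.2, aσ.2⟫ ≤ ‖a.2‖ * ‖aσ.2‖ := real_inner_le_norm _ _
  have hst : (0:ℝ) ≤ ‖a.2‖ * ‖aσ.2‖ := by positivity
  have hna : ‖a.2‖ ^ 2 = a.1 ^ 2 - τ ^ 2 := by linarith
  have hnσ : ‖aσ.2‖ ^ 2 = aσ.1 ^ 2 - σ ^ 2 := by linarith
  have hprod : (‖a.2‖ * ‖aσ.2‖) ^ 2 = (a.1 ^ 2 - τ ^ 2) * (aσ.1 ^ 2 - σ ^ 2) := by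
    rw [mul_pow, hna, hnσ]
  -- reverse Cauchy–Schwarz: m ≥ στ
  have hD0 : 0 ≤ a.1 * aσ.1 - σ * τ := by nlinarith
  have hrev : ‖a.2‖ * ‖aσ.2‖ ≤ a.1 * aσ.1 - σ * τ := by
    apply le_of_sq_le_sq' hst hD0
    rw [hprod]
    nlinarith [sq_nonneg (σ * a.1 - τ * aσ.1)]
  have hm_ge : σ * τ ≤ m := by rw [hmdef]; linarith
  -- the key inequality characterization
  have key : (a - aσ ∈ Vbar) ↔ m ≤ (σ ^ 2 + τ ^ 2) / 2 := by
    constructor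
    · intro h
      have h' : ‖a.2 - aσ.2‖ ≤ a.1 - aσ.1 := h
      have h0 : 0 ≤ a.1 - aσ.1 := le_trans (norm_nonneg _) h'
      have hsq : ‖a.2 - aσ.2‖ ^ 2 ≤ (a.1 - aσ.1) ^ 2 :=
        pow_le_pow_left₀ (norm_nonneg _) h' 2
      rw [norm_sub_sq_real] at hsq
      rw [hmdef]; nlinarith
    · intro h
      rw [hmdef] at h
      -- first show a.1 ≥ aσ.1
      have h1 : aσ.1 ≤ a.1 := by
        by_contra hc
        push_neg at hc
        have hinner : a.1 * aσ.1 - (σ ^ 2 + τ ^ 2) / 2 ≤ ‖a.2‖ * ‖aσ.2‖ := by linarith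
        have hτ2 : τ ^ 2 ≥ (σ ^ 2 + τ ^ 2) / 2 := by nlinarith
        have hD : 0 < a.1 * aσ.1 - (σ ^ 2 + τ ^ 2) / 2 := by nlinarith
        have hDsq : (a.1 * aσ.1 - (σ ^ 2 + τ ^ 2) / 2) ^ 2 ≤ (‖a.2‖ * ‖aσ.2‖) ^ 2 := by
          have := mul_le_mul hinner hinner (le_of_lt hD) hst
          nlinarith
        rw [hprod] at hDsq
        have hfac1 : 0 < τ ^ 2 * aσ.1 - σ ^ 2 * a.1 := by
          have e1 : σ ^ 2 * a.1 ≤ τ ^ 2 * a.1 := by nlinarith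
          have e2 : τ ^ 2 * a.1 < τ ^ 2 * aσ.1 :=
            mul_lt_mul_of_pos_left hc (by positivity)
          linarith
        have hfac : 0 < (τ ^ 2 * aσ.1 - σ ^ 2 * a.1) * (aσ.1 - a.1) :=
          mul_pos hfac1 (by linarith)
        nlinarith [sq_nonneg ((τ ^ 2 - σ ^ 2) / 2)]
      show ‖a.2 - aσ.2‖ ≤ a.1 - aσ.1
      apply le_of_sq_le_sq' (norm_nonneg _) (by linarith)
      rw [norm_sub_sq_real]
      nlinarith
  rw [key]
  -- now the RHS
  have hmink : mink a ((τ / σ) • aσ) = (τ / σ) * m := by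
    rw [hmdef]
    show a.1 * ((τ / σ) • aσ).1 - ⟪a.2, ((τ / σ) • aσ).2⟫ = _
    rw [Prod.smul_fst, Prod.smul_snd, real_inner_smul_right]
    simp only [smul_eq_mul]; ring
  have harg : (τ / σ) * m / τ ^ 2 = m / (σ * τ) := by
    field_simp
  rw [dHyp, hmink, harg]
  have hc1 : (1:ℝ) ≤ (σ ^ 2 + τ ^ 2) / (2 * σ * τ) := by
    rw [le_div_iff₀ (by positivity)]; nlinarith [sq_nonneg (τ - σ)]
  have hm1 : (1:ℝ) ≤ m / (σ * τ) := by
    rw [le_div_iff₀ (by positivity)]; linarith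
  rw [mul_le_mul_iff_right₀ hτ,
    (arcosh_strictMonoOn.le_iff_le (Set.mem_Ici.mpr hm1) (Set.mem_Ici.mpr hc1)),
    div_le_div_iff₀ (by positivity) (by positivity)]
  constructor <;> intro h
  · nlinarith [mul_pos hσ hτ, mul_le_mul_of_nonneg_right h (le_of_lt (mul_pos hσ hτ))]
  · nlinarith [mul_pos hσ hτ]
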